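/- There exists an admissible path polyomino with exactly 120 cells. -/

import Mathlib

open scoped Classical

/-- Two cells of `ℤ²` are adjacent iff they differ by a unit vector. -/
def Adj (p q : ℤ × ℤ) : Prop :=
  (p.1 - q.1).natAbs + (p.2 - q.2).natAbs = 1

/-- A finite set of cells is connected under edge-adjacency. -/
def ConnectedIn (S : Finset (ℤ × ℤ)) : Prop :=
  ∀ p ∈ S, ∀ q ∈ S,
    Relation.ReflTransGen (fun a b => a ∈ S ∧ b ∈ S ∧ Adj a b) p q

/-- A polyomino: a finite nonempty edge-connected subset of `ℤ²`. -/
def IsPolyomino (S : Finset (ℤ × ℤ)) : Prop :=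
  S.Nonempty ∧ ConnectedIn S

/-- Admissible: no four cells equally spaced on a straight line. -/
def Admissible (S : Finset (ℤ × ℤ)) : Prop :=
  ¬ ∃ (p v : ℤ × ℤ), v ≠ 0 ∧ p ∈ S ∧ p + v ∈ S ∧
      p + (2 : ℤ) • v ∈ S ∧ p + (3 : ℤ) • v ∈ S

/-- Degree of a cell in the adjacency graph restricted to `S`. -/
noncomputable def degIn (S : Finset (ℤ × ℤ)) (p : ℤ × ℤ) : ℕ :=
  (S.filter fun q => Adj p q).card

/-- A path polyomino: either a single cell, or a connected set where every cell
has degree at most 2 and exactly two cells have degree 1. -/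
def IsPathPoly (S : Finset (ℤ × ℤ)) : Prop :=
  IsPolyomino S ∧
    (S.card = 1 ∨
      ((∀ p ∈ S, degIn S p ≤ 2) ∧ (S.filter fun p => degIn S p = 1).card = 2))

/-- A loop: a polyomino all of whose cells have degree exactly 2. -/
def IsLoop (S : Finset (ℤ × ℤ)) : Prop :=
  IsPolyomino S ∧ ∀ p ∈ S, degIn S p = 2

/-- Graph distance within `S` (shortest walk staying in `S`). -/
noncomputable def distIn (S : Finset (ℤ × ℤ)) (p q : ℤ × ℤ) : ℕ :=
  sInf {n | ∃ f : ℕ → ℤ × ℤ, f 0 = p ∧ f n = q ∧ (∀ i ≤ n, f i ∈ S) ∧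
    ∀ i < n, Adj (f i) (f (i + 1))}

/-- Graph diameter of `S`. -/
noncomputable def diamIn (S : Finset (ℤ × ℤ)) : ℕ :=
  sSup {d | ∃ p ∈ S, ∃ q ∈ S, distIn S p q = d}

/-- Isometries of the square lattice: bijections of `ℤ²` preserving squared
Euclidean distance (compositions of translations, 90° rotations, reflections). -/
def IsLatticeIso (f : ℤ × ℤ → ℤ × ℤ) : Prop :=
  Function.Bijective f ∧ ∀ p q : ℤ × ℤ,
    ((f p).1 - (f q).1) ^ 2 + ((f p).2 - (f q).2) ^ 2 =
      (p.1 - q.1) ^ 2 + (p.2 - q.2) ^ 2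

/-- Two finite cell sets are equivalent up to a lattice isometry. -/
def IsoEquiv (S T : Finset (ℤ × ℤ)) : Prop :=
  ∃ f, IsLatticeIso f ∧ S.image f = T

/-! ### Auxiliary material -/

set_option maxRecDepth 1000000
set_option maxHeartbeats 4000000

instance adjDecidable (p q : ℤ × ℤ) : Decidable (Adj p q) :=
  decidable_of_iff ((p.1 - q.1).natAbs + (p.2 - q.2).natAbs = 1) Iff.rfl

lemma adj_symm {p q : ℤ × ℤ} (h : Adj p q) : Adj q p := by
  unfold Adj at *; omega

/-- The witness path. -/
def W : List (ℤ × ℤ) := [(0, 0), (-1, 0), (-2, 0), (-2, -1), (-2, -2), (-3, -2), (-3, -3), (-3, -4), (-2, -4), (-2, -5), (-1, -5), (-1, -6), (-1, -7), (-2, -7), (-2, -8), (-2, -9), (-1, -9), (-1, -10), (0, -10), (0, -11), (0, -12), (-1, -12), (-1, -13), (-1, -14), (-2, -14), (-3, -14), (-3, -13), (-4, -13), (-5, -13), (-5, -14), (-5, -15), (-6, -15), (-6, -16), (-6, -17), (-5, -17), (-5, -18), (-4, -18), (-4, -19), (-4, -20), (-5, -20), (-5, -21), (-5, -22), (-4,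 -22), (-4, -23), (-3, -23), (-2, -23), (-2, -22), (-1, -22), (0, -22), (0, -23), (1, -23), (1, -24), (2, -24), (3, -24), (3, -23), (4, -23), (5, -23), (5, -22), (5, -21), (4, -21), (4, -20), (3, -20), (3, -19), (3, -18), (4, -18), (5, -18), (5, -17), (6, -17), (7, -17), (7, -18), (8, -18), (8, -19), (9, -19), (10, -19), (10, -18), (11, -18), (12, -18), (12, -19), (13, -19), (13, -20), (13, -21), (12, -21), (12, -22), (12, -23), (13, -23), (13, -24), (14, -24), (14, -25), (14, -26), (13, -26), (13, -27), (13, -28), (12, -28), (11, -28), (11, -27), (10, -27), (9, -27), (9, -28), (9, -29), (8, -29), (8, -30), (8, -31), (9, -31), (9, -32), (10, -32), (10, -33), (10, -34), (9, -34), (9, -35), (9, -36), (10, -36), (10, -37), (11, -37), (11, -38), (11, -39), (10, -39), (10, -40), (10, -41), (11, -41), (11, -42)]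

/-- Bitboard of the occupied cells. -/
def M : ℕ := 14202312539154301143973277722772849489861739911186508677737757206663666370998831982264213453847609049681653286050299841899984863744708681620533411461842235625787489111250496694640505039655233322989765607659870874168671563028984802258880873632337854164180673060241012864738413752996275897659849982334142667873999100289311277728769426844180870710944139955463875638044865052961884562686726556277271586900851886471143218451892789439285125155784024749665311086735665718495581166170034889398076335151409972373693647793593122750046495841194934925466150745345336022404736262518365715548174319044097906300555842078620169786736296587936890741605042252697339292865726002764796590048788864526805412163945022200839463715114431049658505542852211056541285371487619504289361950112084461324657336038373269446547495008443818277642926384627526890379843655366571103352528506487976546460806373262779387539467353619252148325627522144207226740170109003300363612449477344107547364114603792608177866856164750675337399590182305556796598358311555531734360199960894169187588453726070364162193589042115705682594497490169575414641114777385416285234241650606614771030936668045074597758952720508722174165095096042070990567177347764866762176101674183902186079477045789295880715453857842114933456222474230971871296867236853446382607062307799144438169600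

/-- Encoding of cells as naturals. -/
def codeZ (p : ℤ × ℤ) : ℕ := (p.1 + 20).toNat * 128 + (p.2 + 50).toNat

/-- Boolean check: no four cells of `W` in arithmetic progression. -/
def admisB : Bool := W.all fun p => W.all fun q =>
  (q == p) || !(M.testBit (codeZ (p.1 + 2 * (q.1 - p.1), p.2 + 2 * (q.2 - p.2)))) ||
  !(M.testBit (codeZ (p.1 + 3 * (q.1 - p.1), p.2 + 3 * (q.2 - p.2))))

/-- Boolean chain check. -/
def chainb : List (ℤ × ℤ) → Bool
  | [] => true
  | [_] => true
  | a :: b :: l => (decide (Adj a b)) && chainb (b :: l)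

lemma chain'_of_chainb : ∀ l : List (ℤ × ℤ), chainb l = true → l.Chain' Adj
  | [] , _ => List.isChain_nil
  | [_], _ => List.isChain_singleton _
  | a :: b :: l, h => by
      rw [chainb, Bool.and_eq_true, decide_eq_true_eq] at h
      exact List.IsChain.cons_cons h.1 (chain'_of_chainb (b :: l) h.2)

lemma reach_head (S : Finset (ℤ × ℤ)) :
    ∀ (a : ℤ × ℤ) (l : List (ℤ × ℤ)), (∀ x ∈ a :: l, x ∈ S) → List.Chain Adj a l →
    ∀ p ∈ a :: l, Relation.ReflTransGen (fun u v => u ∈ S ∧ v ∈ S ∧ Adj u v) p a := by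
  intro a l
  induction l generalizing a with
  | nil =>
    intro _ _ p hp
    simp only [List.mem_singleton] at hp
    subst hp; exact .refl
  | cons b l ih =>
    intro hS hch p hp
    rcases List.mem_cons.1 hp with h | h
    · subst h; exact .refl
    · rcases List.isChain_cons_cons.1 hch with ⟨hab, hch⟩
      have hS' : ∀ x ∈ b :: l, x ∈ S := fun x hx => hS x (List.mem_cons_of_mem a hx)
      have hpb := ih b hS' hch p h
      exact hpb.tail ⟨hS' b List.mem_cons_self, hS a List.mem_cons_self, adj_symm hab⟩

lemma connectedIn_of_chain (L : List (ℤ × ℤ)) (h : L.Chain' Adj) :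
    ConnectedIn L.toFinset := by
  intro p hp q hq
  rw [List.mem_toFinset] at hp hq
  cases L with
  | nil => simp at hp
  | cons a l =>
    have hS : ∀ x ∈ a :: l, x ∈ (a :: l).toFinset := fun x hx => List.mem_toFinset.2 hx
    have hch : List.Chain Adj a l := h
    have h1 := reach_head _ a l hS hch p hp
    have h2 := reach_head _ a l hS hch q hq
    have hsym : Symmetric (fun u v => u ∈ (a :: l).toFinset ∧ v ∈ (a :: l).toFinset ∧ Adj u v) :=
      fun u v ⟨h1, h2, h3⟩ => ⟨h2, h1, adj_symm h3⟩
    exact h1.trans ((@Relation.ReflTransGen.stdSymm _ _ ⟨fun _ _ h => hsym h⟩).symm _ _ h2)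

lemma mem_code : ∀ w ∈ W, M.testBit (codeZ w) = true := by decide +kernel

lemma admissible_W : Admissible W.toFinset := by
  rintro ⟨p, v, hv, h0, h1, h2, h3⟩
  rw [List.mem_toFinset] at h0 h1 h2 h3
  have hB : admisB = true := by decide +kernel
  have h : ∀ p ∈ W, ∀ q ∈ W, (q = p ∨
      M.testBit (codeZ (p.1 + 2 * (q.1 - p.1), p.2 + 2 * (q.2 - p.2))) = false) ∨
      M.testBit (codeZ (p.1 + 3 * (q.1 - p.1), p.2 + 3 * (q.2 - p.2))) = false := by
    simp only [admisB, List.all_eq_true, Bool.or_eq_true, Bool.not_eq_true',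
      beq_iff_eq] at hB
    exact hB
  have hq : p + v ≠ p := by
    intro hc
    exact hv (by simpa using congrArg (fun x => x - p) hc)
  have e2 : (p.1 + 2 * ((p + v).1 - p.1), p.2 + 2 * ((p + v).2 - p.2)) = p + (2 : ℤ) • v := by
    obtain ⟨p1, p2⟩ := p; obtain ⟨v1, v2⟩ := v
    refine Prod.ext ?_ ?_ <;> simp
  have e3 : (p.1 + 3 * ((p + v).1 - p.1), p.2 + 3 * ((p + v).2 - p.2)) = p + (3 : ℤ) • v := by
    obtain ⟨p1, p2⟩ := p; obtain ⟨v1, v2⟩ := v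
    refine Prod.ext ?_ ?_ <;> simp
  rcases h p h0 (p + v) h1 with (hc | hc) | hc
  · exact hq hc
  · rw [e2, mem_code _ h2] at hc; exact Bool.noConfusion hc
  · rw [e3, mem_code _ h3] at hc; exact Bool.noConfusion hc

lemma filter_card_list (L : List (ℤ × ℤ)) (hL : L.Nodup) (pr : ℤ × ℤ → Prop)
    [DecidablePred pr] :
    (L.toFinset.filter pr).card = (L.filter fun a => decide (pr a)).length := by
  have h1 : (L.filter fun a => decide (pr a)).toFinset =
      L.toFinset.filter pr := by
    rw [List.toFinset_filter]
    exact Finset.filter_congr fun x _ => by simp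
  rw [← h1, List.toFinset_card_of_nodup (hL.filter _)]

lemma degIn_eq (S : Finset (ℤ × ℤ)) (p : ℤ × ℤ) :
    degIn S p = (S.filter fun q => Adj p q).card := by
  unfold degIn
  exact congrArg Finset.card (Finset.filter_congr_decidable S (fun q => Adj p q) _)

lemma W_nodup : W.Nodup := by decide +kernel

theorem exists_admissible_path_card_120 :
    ∃ S : Finset (ℤ × ℤ), IsPathPoly S ∧ Admissible S ∧ S.card = 120 := by
  refine ⟨W.toFinset, ⟨⟨?_, ?_⟩, ?_⟩, ?_, ?_⟩
  · exact ⟨(0, 0), List.mem_toFinset.2 (by decide)⟩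
  · exact connectedIn_of_chain W (chain'_of_chainb W (by decide +kernel))
  · have hdeg : ∀ p, degIn W.toFinset p = (W.filter fun q => decide (Adj p q)).length := by
      intro p
      rw [degIn_eq, filter_card_list W W_nodup]
    refine Or.inr ⟨?_, ?_⟩
    · have H : ∀ p ∈ W, (W.filter fun q => decide (Adj p q)).length ≤ 2 := by decide +kernel
      intro p hp
      rw [hdeg]
      exact H p (List.mem_toFinset.1 hp)
    · have hfc : (W.toFinset.filter fun p => degIn W.toFinset p = 1) =
          (W.toFinset.filter fun p => (W.filter fun q => decide (Adj p q)).length = 1) := by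
        apply Finset.filter_congr
        intro p _
        simp [hdeg]
      rw [hfc, filter_card_list W W_nodup]
      decide +kernel
  · exact admissible_W
  · rw [List.toFinset_card_of_nodup W_nodup]
    rfl
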